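/- Suppose Ω ⊆ ℝⁿ (n ≥ 2) is open and locally connected on the boundary, and let f : Ω → ℝⁿ be a δ-monotone map (for some δ > 0) that is bounded on bounded subsets of Ω. Then f has a continuous extension to the closure of Ω, and this extension is also δ-monotone. -/

import Mathlib

open Set Metric
open scoped RealInnerProductSpace

/-- A map `f` is *δ-monotone* on a set `Ω` if
`⟪f x - f y, x - y⟫ ≥ δ ‖f x - f y‖ ‖x - y‖` for all `x, y ∈ Ω`. -/
def DeltaMonotoneOn {n : ℕ} (δ : ℝ)
    (f : EuclideanSpace ℝ (Fin n) → EuclideanSpace ℝ (Fin n))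
    (Ω : Set (EuclideanSpace ℝ (Fin n))) : Prop :=
  ∀ x ∈ Ω, ∀ y ∈ Ω, δ * (‖f x - f y‖ * ‖x - y‖) ≤ ⟪f x - f y, x - y⟫

/-- An open set `Ω` is *locally connected on the boundary* if for every `b ∈ ∂Ω` and `r > 0`
there is an open set `U` with `b ∈ U ⊆ B(b, r)` such that `U ∩ Ω` is connected. -/
def LocallyConnectedOnBoundary {n : ℕ} (Ω : Set (EuclideanSpace ℝ (Fin n))) : Prop :=
  ∀ b ∈ frontier Ω, ∀ r > 0, ∃ U : Set (EuclideanSpace ℝ (Fin n)),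
    IsOpen U ∧ b ∈ U ∧ U ⊆ ball b r ∧ IsConnected (U ∩ Ω)

open Filter
open scoped Topology

variable {E : Type*} [NormedAddCommGroup E] [InnerProductSpace ℝ E]

lemma dm_rel_limit (δ : ℝ) {P Q p q : ℕ → E} {P' Q' p' q' : E}
    (hP : Filter.Tendsto P atTop (𝓝 P')) (hQ : Filter.Tendsto Q atTop (𝓝 Q'))
    (hp : Filter.Tendsto p atTop (𝓝 p')) (hq : Filter.Tendsto q atTop (𝓝 q'))
    (h : ∀ k, δ * (‖P k - Q k‖ * ‖p k - q k‖) ≤ ⟪P k - Q k, p k - q k⟫) :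
    δ * (‖P' - Q'‖ * ‖p' - q'‖) ≤ ⟪P' - Q', p' - q'⟫ := by
  refine le_of_tendsto_of_tendsto'
    (f := fun k => δ * (‖P k - Q k‖ * ‖p k - q k‖))
    (g := fun k => ⟪P k - Q k, p k - q k⟫) (b := atTop) ?_ ?_ h
  · exact (tendsto_const_nhds.mul (((hP.sub hQ).norm).mul ((hp.sub hq).norm)))
  · exact (hP.sub hQ).inner (hp.sub hq)

lemma dm_unit_limit (δ : ℝ) {A u : ℕ → E} {A' u' W : E}
    (hA : Filter.Tendsto A atTop (𝓝 A')) (hu : Filter.Tendsto u atTop (𝓝 u'))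
    (h : ∀ k, δ * ‖A k - W‖ ≤ ⟪A k - W, u k⟫) :
    δ * ‖A' - W‖ ≤ ⟪A' - W, u'⟫ := by
  refine le_of_tendsto_of_tendsto'
    (f := fun k => δ * ‖A k - W‖) (g := fun k => ⟪A k - W, u k⟫) (b := atTop) ?_ ?_ h
  · exact tendsto_const_nhds.mul ((hA.sub tendsto_const_nhds).norm)
  · exact (hA.sub tendsto_const_nhds).inner hu

lemma dm_sep {δ : ℝ} {P Q u v : E} (hδ : 0 < δ) (hPQ : P ≠ Q)
    (h1 : δ * ‖P - Q‖ ≤ ⟪P - Q, u⟫) (h2 : δ * ‖Q - P‖ ≤ ⟪Q - P, v⟫) :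
    2 * δ ≤ ‖u - v‖ := by
  have h3 : ⟪Q - P, v⟫ = -⟪P - Q, v⟫ := by
    rw [← inner_neg_left (𝕜 := ℝ)]; rw [neg_sub]
  have hnn : ‖Q - P‖ = ‖P - Q‖ := norm_sub_rev _ _
  have hsum : 2 * δ * ‖P - Q‖ ≤ ⟪P - Q, u - v⟫ := by
    rw [inner_sub_right]
    rw [hnn] at h2; rw [h3] at h2
    linarith
  have hcs : ⟪P - Q, u - v⟫ ≤ ‖P - Q‖ * ‖u - v‖ := real_inner_le_norm _ _
  have hpos : 0 < ‖P - Q‖ := by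
    rw [norm_pos_iff]; exact sub_ne_zero_of_ne hPQ
  nlinarith

lemma dm_zero_of_two_dirs {δ : ℝ} {v w : E} (hδ : 0 < δ)
    (h1 : δ * ‖v‖ ≤ ⟪v, w⟫) (h2 : δ * ‖v‖ ≤ ⟪v, -w⟫) : v = 0 := by
  have h3 : ⟪v, -w⟫ = -⟪v, w⟫ := by rw [inner_neg_right]
  rw [h3] at h2
  have h4 : δ * ‖v‖ ≤ 0 := by linarith
  have hv : ‖v‖ ≤ 0 := by nlinarith [norm_nonneg v]
  simpa [norm_le_zero_iff] using hv

lemma seq_tendsto_of_dist {X : Type*} [PseudoMetricSpace X] {a : ℕ → X} {b : X}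
    (h : ∀ k, dist (a k) b ≤ 1 / (k + 1)) : Filter.Tendsto a atTop (𝓝 b) := by
  rw [tendsto_iff_dist_tendsto_zero]
  refine squeeze_zero (fun k => dist_nonneg) h ?_
  exact tendsto_one_div_add_atTop_nhds_zero_nat

lemma dm_div_helper {δ A B c : ℝ} (hc : 0 < c) (h : δ * (A * c) ≤ B) :
    δ * A ≤ c⁻¹ * B := by
  rw [le_inv_mul_iff₀ hc]; nlinarith

/-- Interior continuity of a δ-monotone locally bounded map, `n ≥ 2`. -/
lemma dm_continuousWithinAt {n : ℕ} (hn : 2 ≤ n)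
    {Ω : Set (EuclideanSpace ℝ (Fin n))} (hopen : IsOpen Ω) {δ : ℝ} (hδ : 0 < δ)
    {f : EuclideanSpace ℝ (Fin n) → EuclideanSpace ℝ (Fin n)}
    (hf : ∀ x ∈ Ω, ∀ y ∈ Ω, δ * (‖f x - f y‖ * ‖x - y‖) ≤ ⟪f x - f y, x - y⟫)
    (hbdd : ∀ B : Set (EuclideanSpace ℝ (Fin n)), Bornology.IsBounded B →
      Bornology.IsBounded (f '' (B ∩ Ω)))
    {x₀ : EuclideanSpace ℝ (Fin n)} (hx₀ : x₀ ∈ Ω) :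
    Filter.Tendsto f (𝓝[Ω] x₀) (𝓝 (f x₀)) := by
  obtain ⟨ε₀, hε₀, hball⟩ := Metric.isOpen_iff.mp hopen x₀ hx₀
  set R : ℝ := ε₀ / 2 with hRdef
  have hR : 0 < R := by positivity
  -- bound on f near x₀
  obtain ⟨M, hM0⟩ := isBounded_iff_forall_norm_le.mp
    (hbdd (ball x₀ ε₀) isBounded_ball)
  have hM : ∀ x, x ∈ ball x₀ ε₀ → x ∈ Ω → ‖f x‖ ≤ M := fun x h1 h2 =>
    hM0 _ ⟨x, ⟨h1, h2⟩, rfl⟩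
  -- radial scales
  set t : ℕ → ℝ := fun k => R / (k + 1) with htdef
  have ht0 : ∀ k, 0 < t k := fun k => by positivity
  have htR : ∀ k : ℕ, t k ≤ R := by
    intro k
    rw [htdef]
    rw [div_le_iff₀ (by positivity)]
    nlinarith [Nat.cast_nonneg (α := ℝ) k, hR]
  have httend : Filter.Tendsto t atTop (𝓝 0) := by
    have h1 : t = fun k : ℕ => R * (1 / (k + 1)) := by
      funext k; rw [htdef]; ring
    rw [h1]
    simpa using tendsto_one_div_add_atTop_nhds_zero_nat.const_mul R
  have htlt : ∀ m k : ℕ, m < k → t k < t m := by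
    intro m k hmk
    apply div_lt_div_of_pos_left hR (by positivity)
    have : (m:ℝ) < k := Nat.cast_lt.mpr hmk
    linarith
  -- radial points
  have hmem : ∀ (s : ℝ), 0 < s → s ≤ R → ∀ w : EuclideanSpace ℝ (Fin n), ‖w‖ = 1 → x₀ + s • w ∈ Ω := by
    intro s hs hsR w hw
    apply hball
    rw [mem_ball, dist_eq_norm]
    have : x₀ + s • w - x₀ = s • w := by abel
    rw [this, norm_smul, hw, mul_one, Real.norm_eq_abs, abs_of_pos hs]
    calc s ≤ R := hsR
    _ < ε₀ := by rw [hRdef]; linarith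
  have hpΩ : ∀ (w : EuclideanSpace ℝ (Fin n)), ‖w‖ = 1 → ∀ k, x₀ + t k • w ∈ Ω := fun w hw k =>
    hmem _ (ht0 k) (htR k) w hw
  have hpball : ∀ (w : EuclideanSpace ℝ (Fin n)), ‖w‖ = 1 → ∀ k, x₀ + t k • w ∈ ball x₀ ε₀ := by
    intro w hw k
    rw [mem_ball, dist_eq_norm]
    have h2 : x₀ + t k • w - x₀ = t k • w := by abel
    rw [h2, norm_smul, hw, mul_one, Real.norm_eq_abs, abs_of_pos (ht0 k)]
    calc t k ≤ R := htR k
    _ < ε₀ := by rw [hRdef]; linarith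
  have hptend : ∀ (w : EuclideanSpace ℝ (Fin n)), Filter.Tendsto (fun k => x₀ + t k • w) atTop (𝓝 x₀) := by
    intro w
    have h1 : Filter.Tendsto (fun k => t k • w) atTop (𝓝 ((0:ℝ) • w)) :=
      httend.smul_const w
    rw [zero_smul] at h1
    simpa using tendsto_const_nhds.add h1
  have hpsub : ∀ (w : EuclideanSpace ℝ (Fin n)) (m k : ℕ),
      (x₀ + t m • w) - (x₀ + t k • w) = (t m - t k) • w := by
    intro w m k; rw [sub_smul]; abel
  -- existence of radial limits
  have hLex : ∀ w : EuclideanSpace ℝ (Fin n), ∃ L : EuclideanSpace ℝ (Fin n), ‖w‖ = 1 →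
      Filter.Tendsto (fun k => f (x₀ + t k • w)) atTop (𝓝 L) := by
    intro w
    by_cases hw : ‖w‖ = 1
    · set c : ℕ → EuclideanSpace ℝ (Fin n) := fun k => f (x₀ + t k • w) with hcdef
      set h : ℕ → ℝ := fun k => ⟪c k, w⟫ with hhdef
      have hpair : ∀ m k : ℕ,
          δ * (‖c m - c k‖ * |t m - t k|) ≤ (t m - t k) * (h m - h k) := by
        intro m k
        have base := hf _ (hpΩ w hw m) _ (hpΩ w hw k)
        rw [hpsub w m k] at base
        rw [norm_smul, hw, mul_one, Real.norm_eq_abs] at base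
        rw [real_inner_smul_right] at base
        have : ⟪c m - c k, w⟫ = h m - h k := by
          rw [hhdef]; simp [inner_sub_left]
        rw [this] at base
        exact base
      have hkey : ∀ m k : ℕ, m < k → δ * ‖c m - c k‖ ≤ h m - h k := by
        intro m k hmk
        have hd : 0 < t m - t k := sub_pos.mpr (htlt m k hmk)
        have := hpair m k
        rw [abs_of_pos hd] at this
        nlinarith [norm_nonneg (c m - c k)]
      have hant : Antitone h := by
        intro m k hmk
        rcases eq_or_lt_of_le hmk with h1 | h1
        · rw [h1]
        · have := hkey m k h1
          nlinarith [norm_nonneg (c m - c k)]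
      have hbdd2 : BddBelow (Set.range h) := by
        refine ⟨-(M * 1), ?_⟩
        rintro x ⟨k, rfl⟩
        have h1 : |⟪c k, w⟫| ≤ ‖c k‖ * ‖w‖ := abs_real_inner_le_norm _ _
        have h2 : ‖c k‖ ≤ M := hM _ (hpball w hw k) (hpΩ w hw k)
        rw [hw] at h1
        have := neg_abs_le (⟪c k, w⟫)
        simp only [hhdef]
        nlinarith
      have hhc : CauchySeq h := (tendsto_atTop_ciInf hant hbdd2).cauchySeq
      have hcc : CauchySeq c := by
        rw [Metric.cauchySeq_iff] at hhc ⊢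
        intro ε hε
        obtain ⟨N, hN⟩ := hhc (δ * ε) (by positivity)
        refine ⟨N, fun m hm k hk => ?_⟩
        have hb : δ * ‖c m - c k‖ ≤ |h m - h k| := by
          rcases lt_trichotomy m k with h1 | h1 | h1
          · calc δ * ‖c m - c k‖ ≤ h m - h k := hkey m k h1
            _ ≤ |h m - h k| := le_abs_self _
          · subst h1; simp
          · rw [norm_sub_rev, abs_sub_comm]
            calc δ * ‖c k - c m‖ ≤ h k - h m := hkey k m h1
            _ ≤ |h k - h m| := le_abs_self _
        have := hN m hm k hk
        rw [Real.dist_eq] at this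
        rw [dist_eq_norm]
        nlinarith
      obtain ⟨L, hL⟩ := cauchySeq_tendsto_of_complete hcc
      exact ⟨L, fun _ => hL⟩
    · exact ⟨0, fun h => absurd h hw⟩
  choose L hL using hLex
  -- cross inequality
  have hcross : ∀ w w' : EuclideanSpace ℝ (Fin n), ‖w‖ = 1 → ‖w'‖ = 1 →
      δ * ‖L w - L w'‖ ≤ ⟪L w - L w', w⟫ := by
    intro w w' hw hw'
    have step1 : ∀ k, δ * ‖f (x₀ + t k • w) - L w'‖ ≤ ⟪f (x₀ + t k • w) - L w', w⟫ := by
      intro k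
      have lim := dm_rel_limit δ
        (P := fun _ => f (x₀ + t k • w)) (Q := fun j => f (x₀ + t j • w'))
        (p := fun _ => x₀ + t k • w) (q := fun j => x₀ + t j • w')
        tendsto_const_nhds (hL w' hw') tendsto_const_nhds (hptend w')
        (fun j => hf _ (hpΩ w hw k) _ (hpΩ w' hw' j))
      have h2 : (x₀ + t k • w) - x₀ = t k • w := by abel
      rw [h2, norm_smul, hw, mul_one, Real.norm_eq_abs, abs_of_pos (ht0 k),
        real_inner_smul_right] at lim
      have h3 := dm_div_helper (ht0 k) lim
      rwa [inv_mul_cancel_left₀ (ht0 k).ne'] at h3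
    exact dm_unit_limit δ (hL w hw) tendsto_const_nhds step1
  have hrule : ∀ w w' : EuclideanSpace ℝ (Fin n), ‖w‖ = 1 → ‖w'‖ = 1 → ‖w - w'‖ < 2 * δ → L w = L w' := by
    intro w w' hw hw' hlt
    by_contra hne
    have := dm_sep hδ hne (hcross w w' hw hw') (hcross w' w hw' hw)
    linarith
  -- connectivity of sphere
  have hrank : 1 < Module.rank ℝ (EuclideanSpace ℝ (Fin n)) := by
    have h1 : Module.rank ℝ (EuclideanSpace ℝ (Fin n)) = (n : Cardinal) := by
      rw [← Module.finrank_eq_rank, finrank_euclideanSpace_fin]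
    rw [h1]
    exact_mod_cast Nat.lt_of_lt_of_le one_lt_two hn
  have hconn : IsPreconnected (sphere (0:EuclideanSpace ℝ (Fin n)) 1) :=
    (isConnected_sphere hrank 0 zero_le_one).isPreconnected
  -- base unit vector
  set w₀ : EuclideanSpace ℝ (Fin n) := EuclideanSpace.single (⟨0, by omega⟩ : Fin n) (1:ℝ) with hw₀def
  have hw₀ : ‖w₀‖ = 1 := by
    rw [hw₀def, EuclideanSpace.norm_single]; norm_num
  have hconst : ∀ w : EuclideanSpace ℝ (Fin n), ‖w‖ = 1 → L w = L w₀ := by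
    intro w1 hw1
    by_contra hne
    set u : Set (EuclideanSpace ℝ (Fin n)) := ⋃ w ∈ {w : EuclideanSpace ℝ (Fin n) | ‖w‖ = 1 ∧ L w = L w₀}, ball w (2*δ) with hudef
    set v : Set (EuclideanSpace ℝ (Fin n)) := ⋃ w ∈ {w : EuclideanSpace ℝ (Fin n) | ‖w‖ = 1 ∧ L w ≠ L w₀}, ball w (2*δ) with hvdef
    have hou : IsOpen u := isOpen_biUnion fun _ _ => isOpen_ball
    have hov : IsOpen v := isOpen_biUnion fun _ _ => isOpen_ball
    have hsub : sphere (0:EuclideanSpace ℝ (Fin n)) 1 ⊆ u ∪ v := by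
      intro z hz
      rw [mem_sphere_zero_iff_norm] at hz
      by_cases h1 : L z = L w₀
      · left; exact mem_biUnion ⟨hz, h1⟩ (mem_ball_self (by positivity))
      · right; exact mem_biUnion ⟨hz, h1⟩ (mem_ball_self (by positivity))
    have hnu : (sphere (0:EuclideanSpace ℝ (Fin n)) 1 ∩ u).Nonempty := by
      refine ⟨w₀, ?_, ?_⟩
      · rwa [mem_sphere_zero_iff_norm]
      · exact mem_biUnion ⟨hw₀, rfl⟩ (mem_ball_self (by positivity))
    have hnv : (sphere (0:EuclideanSpace ℝ (Fin n)) 1 ∩ v).Nonempty := by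
      refine ⟨w1, ?_, ?_⟩
      · rwa [mem_sphere_zero_iff_norm]
      · exact mem_biUnion ⟨hw1, hne⟩ (mem_ball_self (by positivity))
    obtain ⟨z, hzs, hzu, hzv⟩ := hconn u v hou hov hsub hnu hnv
    rw [mem_sphere_zero_iff_norm] at hzs
    obtain ⟨wa, ⟨hwa, hwac⟩, hza⟩ := mem_iUnion₂.mp hzu
    obtain ⟨wb, ⟨hwb, hwbc⟩, hzb⟩ := mem_iUnion₂.mp hzv
    rw [mem_ball, dist_eq_norm] at hza hzb
    have e1 : L z = L wa := hrule z wa hzs hwa hza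
    have e2 : L z = L wb := hrule z wb hzs hwb hzb
    exact hwbc (by rw [← e2, e1, hwac])
  -- each radial limit equals f x₀
  have hradf : ∀ w : EuclideanSpace ℝ (Fin n), ‖w‖ = 1 → δ * ‖L w - f x₀‖ ≤ ⟪L w - f x₀, w⟫ := by
    intro w hw
    refine dm_unit_limit δ (hL w hw) tendsto_const_nhds ?_
    intro k
    have base := hf _ (hpΩ w hw k) _ hx₀
    have h2 : (x₀ + t k • w) - x₀ = t k • w := by abel
    rw [h2, norm_smul, hw, mul_one, Real.norm_eq_abs, abs_of_pos (ht0 k),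
      real_inner_smul_right] at base
    have h3 := dm_div_helper (ht0 k) base
    rwa [inv_mul_cancel_left₀ (ht0 k).ne'] at h3
  have hLfx : L w₀ = f x₀ := by
    have hnw₀ : ‖-w₀‖ = 1 := by rw [norm_neg, hw₀]
    have h1 := hradf w₀ hw₀
    have h2 := hradf (-w₀) hnw₀
    rw [hconst (-w₀) hnw₀] at h2
    have := dm_zero_of_two_dirs hδ h1 h2
    exact sub_eq_zero.mp this
  -- main convergence
  by_contra hcon
  rw [Metric.tendsto_nhdsWithin_nhds] at hcon
  push_neg at hcon
  obtain ⟨ε, hε, hviol⟩ := hcon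
  have hchoice : ∀ k : ℕ, ∃ x, x ∈ Ω ∧ dist x x₀ < min (1/((k:ℝ)+1)) R ∧
      ε ≤ dist (f x) (f x₀) := by
    intro k
    obtain ⟨x, hx1, hx2, hx3⟩ := hviol (min (1/((k:ℝ)+1)) R) (lt_min (by positivity) hR)
    exact ⟨x, hx1, hx2, hx3⟩
  choose y hyΩ hyd hyf using hchoice
  have hytend : Filter.Tendsto y atTop (𝓝 x₀) :=
    seq_tendsto_of_dist fun k => ((hyd k).le.trans (min_le_left _ _))
  have hyball : ∀ k, y k ∈ ball x₀ ε₀ := by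
    intro k
    rw [mem_ball]
    calc dist (y k) x₀ < min (1/((k:ℝ)+1)) R := hyd k
    _ ≤ R := min_le_right _ _
    _ < ε₀ := by rw [hRdef]; linarith
  have hybdd : ∀ k, f (y k) ∈ closedBall (0:EuclideanSpace ℝ (Fin n)) M := by
    intro k
    rw [mem_closedBall, dist_zero_right]
    exact hM _ (hyball k) (hyΩ k)
  obtain ⟨L', _, φ, hφ, hconv⟩ := tendsto_subseq_of_bounded
    (isBounded_closedBall (x := (0:EuclideanSpace ℝ (Fin n))) (r := M)) hybdd
  have hyφ : Filter.Tendsto (y ∘ φ) atTop (𝓝 x₀) := hytend.comp hφ.tendsto_atTop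
  -- L' = f x₀
  have hkey2 : ∀ w : EuclideanSpace ℝ (Fin n), ‖w‖ = 1 → δ * ‖f x₀ - L'‖ ≤ ⟪f x₀ - L', w⟫ := by
    intro w hw
    have step : ∀ j, δ * ‖f (x₀ + t j • w) - L'‖ ≤ ⟪f (x₀ + t j • w) - L', w⟫ := by
      intro j
      have lim := dm_rel_limit δ
        (P := fun _ => f (x₀ + t j • w)) (Q := fun i => f (y (φ i)))
        (p := fun _ => x₀ + t j • w) (q := fun i => y (φ i))
        tendsto_const_nhds hconv tendsto_const_nhds hyφ
        (fun i => hf _ (hpΩ w hw j) _ (hyΩ (φ i)))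
      have h2 : (x₀ + t j • w) - x₀ = t j • w := by abel
      rw [h2, norm_smul, hw, mul_one, Real.norm_eq_abs, abs_of_pos (ht0 j),
        real_inner_smul_right] at lim
      have h3 := dm_div_helper (ht0 j) lim
      rwa [inv_mul_cancel_left₀ (ht0 j).ne'] at h3
    have := dm_unit_limit δ (A := fun j => f (x₀ + t j • w)) (u := fun _ => w)
      (W := L') (hL w hw) tendsto_const_nhds step
    rwa [hconst w hw, hLfx] at this
  have hL'eq : f x₀ = L' := by
    have hnw₀ : ‖-w₀‖ = 1 := by rw [norm_neg, hw₀]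
    have := dm_zero_of_two_dirs hδ (hkey2 w₀ hw₀) (hkey2 (-w₀) hnw₀)
    exact sub_eq_zero.mp this
  have hdist : Filter.Tendsto (fun i => dist (f (y (φ i))) (f x₀)) atTop
      (𝓝 (dist L' (f x₀))) := (hconv.dist tendsto_const_nhds)
  have : ε ≤ dist L' (f x₀) :=
    le_of_tendsto_of_tendsto' tendsto_const_nhds hdist (fun i => hyf (φ i))
  rw [← hL'eq, dist_self] at this
  linarith

/-- Existence of a limit of a δ-monotone map at a boundary point of a domain locally
connected on the boundary. -/
lemma dm_boundary_limit {n : ℕ} (hn : 2 ≤ n)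
    {Ω : Set (EuclideanSpace ℝ (Fin n))} (hopen : IsOpen Ω)
    (hlc : ∀ b ∈ frontier Ω, ∀ r > 0, ∃ U : Set (EuclideanSpace ℝ (Fin n)),
      IsOpen U ∧ b ∈ U ∧ U ⊆ ball b r ∧ IsConnected (U ∩ Ω))
    {δ : ℝ} (hδ : 0 < δ)
    {f : EuclideanSpace ℝ (Fin n) → EuclideanSpace ℝ (Fin n)}
    (hf : ∀ x ∈ Ω, ∀ y ∈ Ω, δ * (‖f x - f y‖ * ‖x - y‖) ≤ ⟪f x - f y, x - y⟫)
    (hbdd : ∀ B : Set (EuclideanSpace ℝ (Fin n)), Bornology.IsBounded B →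
      Bornology.IsBounded (f '' (B ∩ Ω)))
    {b : EuclideanSpace ℝ (Fin n)} (hb : b ∈ closure Ω) (hbn : b ∉ Ω) :
    ∃ L, Filter.Tendsto f (𝓝[Ω] b) (𝓝 L) := by
  have hcont : ∀ x ∈ Ω, ContinuousWithinAt f Ω x := fun x hx =>
    dm_continuousWithinAt hn hopen hδ hf hbdd hx
  have hfr : b ∈ frontier Ω := by
    rw [frontier, hopen.interior_eq]; exact ⟨hb, hbn⟩
  obtain ⟨M, hM0⟩ := isBounded_iff_forall_norm_le.mp (hbdd (ball b 1) isBounded_ball)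
  have hM : ∀ x, x ∈ ball b 1 → x ∈ Ω → ‖f x‖ ≤ M := fun x h1 h2 =>
    hM0 _ ⟨x, ⟨h1, h2⟩, rfl⟩
  have hone : ∀ k : ℕ, 1/((k:ℝ)+1) ≤ 1 := by
    intro k
    rw [div_le_one (by positivity)]
    simp [Nat.cast_nonneg]
  -- a sequence approaching b
  have haex : ∀ k : ℕ, ∃ x, x ∈ Ω ∧ dist x b < 1/((k:ℝ)+1) := by
    intro k
    obtain ⟨x, hx1, hx2⟩ := Metric.mem_closure_iff.mp hb (1/((k:ℝ)+1)) (by positivity)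
    exact ⟨x, hx1, by rwa [dist_comm]⟩
  choose a0 ha0Ω ha0d using haex
  have ha0tend : Filter.Tendsto a0 atTop (𝓝 b) :=
    seq_tendsto_of_dist fun k => (ha0d k).le
  have ha0bdd : ∀ k, f (a0 k) ∈ closedBall (0:EuclideanSpace ℝ (Fin n)) M := by
    intro k
    rw [mem_closedBall, dist_zero_right]
    exact hM _ (mem_ball.mpr ((ha0d k).trans_le (hone k))) (ha0Ω k)
  obtain ⟨A₀, _, φ₀, hφ₀, hA₀⟩ := tendsto_subseq_of_bounded
    (isBounded_closedBall (x := (0:EuclideanSpace ℝ (Fin n))) (r := M)) ha0bdd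
  set a : ℕ → EuclideanSpace ℝ (Fin n) := a0 ∘ φ₀ with hadef
  have haΩ : ∀ k, a k ∈ Ω := fun k => ha0Ω (φ₀ k)
  have hatend : Filter.Tendsto a atTop (𝓝 b) := ha0tend.comp hφ₀.tendsto_atTop
  have hA : Filter.Tendsto (fun k => f (a k)) atTop (𝓝 A₀) := hA₀
  refine ⟨A₀, ?_⟩
  by_contra hcon
  rw [Metric.tendsto_nhdsWithin_nhds] at hcon
  push_neg at hcon
  obtain ⟨ε, hε, hviol⟩ := hcon
  choose q hqΩ hqd hqf using fun k : ℕ => hviol (1/((k:ℝ)+1)) (by positivity)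
  have hqtend : Filter.Tendsto q atTop (𝓝 b) :=
    seq_tendsto_of_dist fun k => (hqd k).le
  -- for every 0 < ρ < ε and every scale, there is a point where ‖f x - A₀‖ = ρ
  have hconstr : ∀ ρ : ℝ, 0 < ρ → ρ < ε → ∀ m : ℕ, ∃ x, x ∈ Ω ∧
      dist x b < 1/((m:ℝ)+1) ∧ ‖f x - A₀‖ = ρ := by
    intro ρ hρ hρε m
    obtain ⟨U, hUo, hbU, hUsub, hUconn⟩ := hlc b hfr (1/((m:ℝ)+1)) (by positivity)
    have hev1 : ∀ᶠ k in atTop, a k ∈ U := hatend.eventually (hUo.mem_nhds hbU)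
    have hev2 : ∀ᶠ k in atTop, dist (f (a k)) A₀ < ρ :=
      hA.eventually (Metric.ball_mem_nhds A₀ hρ)
    obtain ⟨k1, hk1U, hk1d⟩ := (hev1.and hev2).exists
    obtain ⟨k2, hk2U⟩ := (hqtend.eventually (hUo.mem_nhds hbU)).exists
    have hφc : ContinuousOn (fun x => ‖f x - A₀‖) (U ∩ Ω) := by
      have h1 : ContinuousOn f (U ∩ Ω) := fun x hx =>
        (hcont x hx.2).mono inter_subset_right
      exact (h1.sub continuousOn_const).norm
    have hPm : a k1 ∈ U ∩ Ω := ⟨hk1U, haΩ k1⟩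
    have hQm : q k2 ∈ U ∩ Ω := ⟨hk2U, hqΩ k2⟩
    have hIcc : ρ ∈ Icc (‖f (a k1) - A₀‖) (‖f (q k2) - A₀‖) := by
      constructor
      · rw [← dist_eq_norm]; exact hk1d.le
      · rw [← dist_eq_norm]; exact hρε.le.trans (hqf k2)
    obtain ⟨x, hxm, hxval⟩ :=
      hUconn.isPreconnected.intermediate_value hPm hQm hφc hIcc
    exact ⟨x, hxm.2, mem_ball.mp (hUsub hxm.1), hxval⟩
  -- construct, for each i, a limit value V i at distance ε/2^(i+1) from A₀
  -- together with a limit direction u i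
  have hVi : ∀ i : ℕ, ∃ (x : ℕ → EuclideanSpace ℝ (Fin n))
      (V u : EuclideanSpace ℝ (Fin n)), (∀ m, x m ∈ Ω) ∧
      Filter.Tendsto x atTop (𝓝 b) ∧
      Filter.Tendsto (fun m => f (x m)) atTop (𝓝 V) ∧
      ‖V - A₀‖ = ε/2^(i+1) ∧ ‖u‖ = 1 ∧
      Filter.Tendsto (fun m => ‖x m - b‖⁻¹ • (x m - b)) atTop (𝓝 u) := by
    intro i
    have h2pow : (1:ℝ) < 2^(i+1) := by
      calc (1:ℝ) < 2 := one_lt_two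
      _ = 2^1 := (pow_one 2).symm
      _ ≤ 2^(i+1) := by
        apply pow_le_pow_right₀ one_le_two
        omega
    have hρ : 0 < ε/2^(i+1) := by positivity
    have hρε : ε/2^(i+1) < ε := div_lt_self hε h2pow
    choose X hXΩ hXd hXval using hconstr (ε/2^(i+1)) hρ hρε
    have hXtend : Filter.Tendsto X atTop (𝓝 b) :=
      seq_tendsto_of_dist fun m => (hXd m).le
    have hXbdd : ∀ m, f (X m) ∈ closedBall (0:EuclideanSpace ℝ (Fin n)) M := by
      intro m
      rw [mem_closedBall, dist_zero_right]
      exact hM _ (mem_ball.mpr ((hXd m).trans_le (hone m))) (hXΩ m)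
    obtain ⟨V, _, ψ, hψ, hV⟩ := tendsto_subseq_of_bounded
      (isBounded_closedBall (x := (0:EuclideanSpace ℝ (Fin n))) (r := M)) hXbdd
    have hdmem : ∀ m, ‖X (ψ m) - b‖⁻¹ • (X (ψ m) - b) ∈
        sphere (0:EuclideanSpace ℝ (Fin n)) 1 := by
      intro m
      have hne : X (ψ m) - b ≠ 0 :=
        sub_ne_zero.mpr (fun h => hbn (h ▸ hXΩ (ψ m)))
      rw [mem_sphere_zero_iff_norm, norm_smul, norm_inv, norm_norm]
      exact inv_mul_cancel₀ (norm_ne_zero_iff.mpr hne)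
    obtain ⟨u, humem, χ, hχ, hu⟩ := (isCompact_sphere
      (0:EuclideanSpace ℝ (Fin n)) 1).tendsto_subseq hdmem
    refine ⟨fun m => X (ψ (χ m)), V, u, fun m => hXΩ _, ?_, ?_, ?_, ?_, ?_⟩
    · exact (hXtend.comp hψ.tendsto_atTop).comp hχ.tendsto_atTop
    · exact hV.comp hχ.tendsto_atTop
    · have h1 : Filter.Tendsto (fun m => ‖f (X (ψ m)) - A₀‖) atTop (𝓝 ‖V - A₀‖) :=
        (hV.sub tendsto_const_nhds).norm
      have h2 : (fun m => ‖f (X (ψ m)) - A₀‖) = fun _ => ε/2^(i+1) :=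
        funext fun m => hXval (ψ m)
      rw [h2] at h1
      exact (tendsto_nhds_unique tendsto_const_nhds h1).symm
    · exact mem_sphere_zero_iff_norm.mp humem
    · exact hu
  choose xseq V u hxΩ hxtend hfx hVnorm hunorm hutend using hVi
  -- the key pairwise inequality
  have hpairVV : ∀ i j : ℕ, δ * ‖V i - V j‖ ≤ ⟪V i - V j, u i⟫ := by
    intro i j
    refine dm_unit_limit δ (hfx i) (hutend i) ?_
    intro m
    have lim := dm_rel_limit δ
      (P := fun _ => f (xseq i m)) (Q := fun k => f (xseq j k))
      (p := fun _ => xseq i m) (q := xseq j)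
      tendsto_const_nhds (hfx j) tendsto_const_nhds (hxtend j)
      (fun k => hf _ (hxΩ i m) _ (hxΩ j k))
    have hne : xseq i m - b ≠ 0 := sub_ne_zero.mpr (fun h => hbn (h ▸ hxΩ i m))
    have hpos : 0 < ‖xseq i m - b‖ := norm_pos_iff.mpr hne
    have h3 := dm_div_helper hpos lim
    rwa [← real_inner_smul_right] at h3
  -- distinct limit values
  have hVne : ∀ i j : ℕ, i ≠ j → V i ≠ V j := by
    intro i j hij hVeq
    apply hij
    have h1 : ε/2^(i+1) = ε/2^(j+1) := by rw [← hVnorm i, ← hVnorm j, hVeq]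
    have ha : (0:ℝ) < 2^(i+1) := by positivity
    have hb : (0:ℝ) < 2^(j+1) := by positivity
    rw [div_eq_div_iff ha.ne' hb.ne'] at h1
    have h2 : (2:ℝ)^(i+1) = 2^(j+1) := (mul_left_cancel₀ hε.ne' h1).symm
    have h3 := (pow_right_inj₀ (by norm_num : (0:ℝ) < 2) (by norm_num : (2:ℝ) ≠ 1)).mp h2
    omega
  have hsep : ∀ i j : ℕ, i ≠ j → 2 * δ ≤ ‖u i - u j‖ := fun i j hij =>
    dm_sep hδ (hVne i j hij) (hpairVV i j) (hpairVV j i)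
  -- contradiction with compactness of the sphere
  have humem : ∀ i, u i ∈ sphere (0:EuclideanSpace ℝ (Fin n)) 1 := fun i =>
    mem_sphere_zero_iff_norm.mpr (hunorm i)
  obtain ⟨uLim, _, σ, hσ, huσ⟩ := (isCompact_sphere
    (0:EuclideanSpace ℝ (Fin n)) 1).tendsto_subseq humem
  obtain ⟨N, hN⟩ := (Metric.tendsto_atTop.mp huσ) δ hδ
  have h1 := hN N (le_refl N)
  have h2 := hN (N+1) (by omega)
  have h3 : dist (u (σ N)) (u (σ (N+1))) < 2 * δ := by
    calc dist (u (σ N)) (u (σ (N+1))) ≤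
        dist (u (σ N)) uLim + dist uLim (u (σ (N+1))) := dist_triangle _ _ _
    _ < δ + δ := by rw [dist_comm uLim]; exact add_lt_add h1 h2
    _ = 2 * δ := by ring
  have h4 : σ N ≠ σ (N+1) := (hσ (by omega : N < N+1)).ne
  have h5 := hsep (σ N) (σ (N+1)) h4
  rw [dist_eq_norm] at h3
  linarith

/-- A δ-monotone map on an open set `Ω ⊆ ℝⁿ` (`n ≥ 2`) that is locally connected on the
boundary, bounded on bounded subsets of `Ω`, extends continuously to `closure Ω`, and the
extension is δ-monotone. -/
theorem deltaMonotone_extension {n : ℕ} (hn : 2 ≤ n)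
    (Ω : Set (EuclideanSpace ℝ (Fin n))) (hopen : IsOpen Ω)
    (hlc : LocallyConnectedOnBoundary Ω) (δ : ℝ) (hδ : 0 < δ)
    (f : EuclideanSpace ℝ (Fin n) → EuclideanSpace ℝ (Fin n))
    (hf : DeltaMonotoneOn δ f Ω)
    (hbdd : ∀ B : Set (EuclideanSpace ℝ (Fin n)), Bornology.IsBounded B →
      Bornology.IsBounded (f '' (B ∩ Ω))) :
    ∃ g : EuclideanSpace ℝ (Fin n) → EuclideanSpace ℝ (Fin n),
      ContinuousOn g (closure Ω) ∧ (∀ x ∈ Ω, g x = f x) ∧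
      DeltaMonotoneOn δ g (closure Ω) := by
  classical
  have hf' : ∀ x ∈ Ω, ∀ y ∈ Ω, δ * (‖f x - f y‖ * ‖x - y‖) ≤ ⟪f x - f y, x - y⟫ := hf
  have hlim : ∀ b, b ∈ closure Ω → ∃ L, Filter.Tendsto f (𝓝[Ω] b) (𝓝 L) := by
    intro b hb
    by_cases hbΩ : b ∈ Ω
    · exact ⟨f b, dm_continuousWithinAt hn hopen hδ hf' hbdd hbΩ⟩
    · exact dm_boundary_limit hn hopen hlc hδ hf' hbdd hb hbΩ
  choose G hG using hlim
  set g : EuclideanSpace ℝ (Fin n) → EuclideanSpace ℝ (Fin n) :=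
    fun x => if h : x ∈ closure Ω then G x h else f x with hgdef
  have hgtend : ∀ b (hb : b ∈ closure Ω), Filter.Tendsto f (𝓝[Ω] b) (𝓝 (g b)) := by
    intro b hb
    rw [hgdef]
    simp only [dif_pos hb]
    exact hG b hb
  have hnebot : ∀ b, b ∈ closure Ω → (𝓝[Ω] b).NeBot := fun b hb =>
    mem_closure_iff_nhdsWithin_neBot.mp hb
  have hgf : ∀ x ∈ Ω, g x = f x := by
    intro x hx
    haveI := hnebot x (subset_closure hx)
    exact tendsto_nhds_unique (hgtend x (subset_closure hx))
      (dm_continuousWithinAt hn hopen hδ hf' hbdd hx)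
  refine ⟨g, ?_, hgf, ?_⟩
  · -- continuity on the closure
    intro b hb
    rw [Metric.continuousWithinAt_iff]
    intro ε hε
    obtain ⟨d, hd, hdp⟩ := (Metric.tendsto_nhdsWithin_nhds.mp (hgtend b hb)) (ε/3)
      (by positivity)
    refine ⟨d/2, by positivity, ?_⟩
    intro y hy hyb
    haveI := hnebot y hy
    obtain ⟨d', hd', hdp'⟩ := (Metric.tendsto_nhdsWithin_nhds.mp (hgtend y hy)) (ε/3)
      (by positivity)
    have hmem : Ω ∩ ball y (min d' (d/2)) ∈ 𝓝[Ω] y := by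
      refine Filter.inter_mem self_mem_nhdsWithin ?_
      exact mem_nhdsWithin_of_mem_nhds (ball_mem_nhds y (lt_min hd' (by positivity)))
    obtain ⟨x, hxΩ, hxb⟩ := Filter.nonempty_of_mem hmem
    rw [mem_ball] at hxb
    have h1 : dist (f x) (g y) < ε/3 :=
      hdp' hxΩ ((hxb.trans_le (min_le_left _ _)))
    have h2 : dist (f x) (g b) < ε/3 := by
      apply hdp hxΩ
      calc dist x b ≤ dist x y + dist y b := dist_triangle _ _ _
      _ < d/2 + d/2 := add_lt_add (hxb.trans_le (min_le_right _ _)) hyb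
      _ = d := by ring
    calc dist (g y) (g b) ≤ dist (g y) (f x) + dist (f x) (g b) := dist_triangle _ _ _
    _ < ε/3 + ε/3 := add_lt_add (by rwa [dist_comm]) h2
    _ < ε := by linarith
  · -- δ-monotonicity on the closure
    intro x hx y hy
    obtain ⟨xs, hxsΩ, hxs⟩ := mem_closure_iff_seq_limit.mp hx
    obtain ⟨ys, hysΩ, hys⟩ := mem_closure_iff_seq_limit.mp hy
    have hfx : Filter.Tendsto (fun k => f (xs k)) atTop (𝓝 (g x)) :=
      (hgtend x hx).comp (tendsto_nhdsWithin_iff.mpr ⟨hxs, Eventually.of_forall hxsΩ⟩)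
    have hfy : Filter.Tendsto (fun k => f (ys k)) atTop (𝓝 (g y)) :=
      (hgtend y hy).comp (tendsto_nhdsWithin_iff.mpr ⟨hys, Eventually.of_forall hysΩ⟩)
    exact dm_rel_limit δ hfx hfy hxs hys (fun k => hf' _ (hxsΩ k) _ (hysΩ k))
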